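/- arXiv:2406.05399 — 2 statements merged into one kernel-verified Lean document; each statement's English description precedes it below -/
import Mathlib

section
/- For integers N ≥ 1 and the cyclic distance D(l₁,l₂) := min{|l₁−l₂|, N−|l₁−l₂|} on {0,1,…,N−1}, and for a triple (l₁,l₂,l₃) define D(l₁,l₂,l₃) := max over i of min over j≠i of D(lᵢ,l_j). Then for every r ≥ 0, the number of triples (l₁,l₂,l₃) ∈ {0,…,N−1}³ with D(l₁,l₂,l₃) = r is at most C·N·(r+1) for some absolute constant C. -/
/-- Cyclic distance on `{0,…,N−1}`. -/
def Dpair (N l₁ l₂ : ℕ) : ℕ :=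
  min (max l₁ l₂ - min l₁ l₂) (N - (max l₁ l₂ - min l₁ l₂))

/-- Max-min distance for a triple. -/
def D3 (N l₁ l₂ l₃ : ℕ) : ℕ :=
  max (max (min (Dpair N l₁ l₂) (Dpair N l₁ l₃))
           (min (Dpair N l₂ l₁) (Dpair N l₂ l₃)))
      (min (Dpair N l₃ l₁) (Dpair N l₃ l₂))

lemma Dpair_comm (N x y : ℕ) : Dpair N x y = Dpair N y x := by
  unfold Dpair; omega

lemma dmod (N x y : ℕ) (hx : x < N) (hy : y < N) :
    (y + N - x) % N = if x ≤ y then y - x else y + N - x := by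
  rcases le_or_gt x y with h | h
  · have h2 : y + N - x = (y - x) + N := by omega
    rw [h2, Nat.add_mod_right, Nat.mod_eq_of_lt (by omega), if_pos h]
  · rw [Nat.mod_eq_of_lt (by omega), if_neg (by omega)]

lemma dpair_eq (N x y : ℕ) (hx : x < N) (hy : y < N) :
    Dpair N x y = min ((y + N - x) % N) (N - (y + N - x) % N) := by
  rw [dmod N x y hx hy]; unfold Dpair; split_ifs <;> omega

def enc (N r x y : ℕ) : ℕ :=
  if (y + N - x) % N ≤ r then (y + N - x) % N else (y + N - x) % N + (2*r+1) - N

lemma enc_lt {N r x y : ℕ} (hx : x < N) (hy : y < N) (h : Dpair N x y ≤ r) :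
    enc N r x y < 2*r+1 := by
  rw [dpair_eq N x y hx hy] at h
  have hdn : (y + N - x) % N < N := Nat.mod_lt _ (by omega)
  unfold enc; split_ifs <;> omega

lemma enc_mem {N r x y : ℕ} (hx : x < N) (hy : y < N) (h : Dpair N x y = r) :
    enc N r x y = r ∨ enc N r x y = r + 1 := by
  rw [dpair_eq N x y hx hy] at h
  have hdn : (y + N - x) % N < N := Nat.mod_lt _ (by omega)
  unfold enc; split_ifs <;> omega

lemma enc_inj {N r x y y' : ℕ} (hx : x < N) (hy : y < N) (hy' : y' < N)
    (h : Dpair N x y ≤ r) (h' : Dpair N x y' ≤ r)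
    (he : enc N r x y = enc N r x y') : y = y' := by
  rw [dpair_eq N x y hx hy] at h
  rw [dpair_eq N x y' hx hy'] at h'
  have hd := dmod N x y hx hy
  have hd' := dmod N x y' hx hy'
  unfold enc at he
  rcases le_or_gt x y with h1 | h1 <;> rcases le_or_gt x y' with h2 | h2 <;>
    [rw [if_pos h1] at hd; rw [if_pos h1] at hd; rw [if_neg (by omega)] at hd;
     rw [if_neg (by omega)] at hd] <;>
    first
      | (rw [if_pos h2] at hd'; split_ifs at he <;> omega)
      | (rw [if_neg (by omega : ¬ x ≤ y')] at hd'; split_ifs at he <;> omega)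

lemma key (N r : ℕ) (S : Finset (ℕ×ℕ×ℕ))
    (hS : ∀ p ∈ S, p.1 < N ∧ p.2.1 < N ∧ p.2.2 < N ∧ Dpair N p.1 p.2.1 = r ∧
        (Dpair N p.1 p.2.2 ≤ r ∨ Dpair N p.2.1 p.2.2 ≤ r)) :
    S.card ≤ 4 * (N * (2*r+1)) := by
  classical
  have hb : ∀ p ∈ S, Dpair N p.1 p.2.2 ≤ r ∨ Dpair N p.2.1 p.2.2 ≤ r :=
    fun p hp => (hS p hp).2.2.2.2
  have hcard := Finset.card_le_card_of_injOn
    (f := fun p : ℕ×ℕ×ℕ =>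
      (p.1, enc N r p.1 p.2.1 - r,
        ((if Dpair N p.1 p.2.2 ≤ r then 0 else 1),
         (if Dpair N p.1 p.2.2 ≤ r then enc N r p.1 p.2.2 else enc N r p.2.1 p.2.2))))
    (t := Finset.range N ×ˢ Finset.range 2 ×ˢ Finset.range 2 ×ˢ Finset.range (2*r+1))
    (fun p hp => by
      obtain ⟨ha, hb', hc, hab, hor⟩ := hS p hp
      simp only [Finset.mem_coe, Finset.mem_product, Finset.mem_range]
      refine ⟨ha, ?_, ?_, ?_⟩
      · have := enc_mem ha hb' hab; omega
      · split_ifs <;> omega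
      · split_ifs with h
        · exact enc_lt ha hc h
        · exact enc_lt hb' hc (by tauto))
    (fun p hp q hq heq => by
      obtain ⟨a, b, c⟩ := p
      obtain ⟨a', b', c'⟩ := q
      obtain ⟨ha, hbn, hcn, hab, hor⟩ := hS _ (Finset.mem_coe.mp hp)
      obtain ⟨ha2, hb2, hc2, hab2, hor2⟩ := hS _ (Finset.mem_coe.mp hq)
      simp only [Prod.mk.injEq] at heq ⊢
      obtain ⟨e1, e2, e3, e4⟩ := heq
      dsimp only at ha hbn hcn hab hor ha2 hb2 hc2 hab2 hor2 e2 e3 e4 ⊢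
      subst e1
      have hbb : b = b' := enc_inj ha hbn hb2 hab.le hab2.le
        (by have m1 := enc_mem ha hbn hab; have m2 := enc_mem ha hb2 hab2; omega)
      subst hbb
      refine ⟨rfl, rfl, ?_⟩
      by_cases h : Dpair N a c ≤ r <;> by_cases h' : Dpair N a c' ≤ r
      · rw [if_pos h, if_pos h'] at e4; exact enc_inj ha hcn hc2 h h' e4
      · simp [h, h'] at e3
      · simp [h, h'] at e3
      · rw [if_neg h, if_neg h'] at e4
        exact enc_inj hbn hcn hc2 (hor.resolve_left h) (hor2.resolve_left h') e4)
  calc S.card ≤ _ := hcard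
    _ ≤ 4 * (N * (2*r+1)) := by
        simp only [Finset.card_product, Finset.card_range]; ring_nf; omega

theorem stmt0 :
    ∃ C : ℝ, 0 < C ∧ ∀ N : ℕ, 1 ≤ N → ∀ r : ℕ,
      (((Finset.range N ×ˢ Finset.range N ×ˢ Finset.range N).filter
        (fun l => D3 N l.1 l.2.1 l.2.2 = r)).card : ℝ) ≤ C * N * (r + 1) := by
  classical
  refine ⟨24, by norm_num, fun N hN r => ?_⟩
  set cube := Finset.range N ×ˢ Finset.range N ×ˢ Finset.range N with hcube
  set P1 : ℕ×ℕ×ℕ → Prop := fun p =>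
    Dpair N p.1 p.2.1 = r ∧ (Dpair N p.1 p.2.2 ≤ r ∨ Dpair N p.2.1 p.2.2 ≤ r) with hP1
  set P2 : ℕ×ℕ×ℕ → Prop := fun p =>
    Dpair N p.1 p.2.2 = r ∧ (Dpair N p.1 p.2.1 ≤ r ∨ Dpair N p.2.1 p.2.2 ≤ r) with hP2
  set P3 : ℕ×ℕ×ℕ → Prop := fun p =>
    Dpair N p.2.1 p.2.2 = r ∧ (Dpair N p.1 p.2.1 ≤ r ∨ Dpair N p.1 p.2.2 ≤ r) with hP3
  have hmem : ∀ p ∈ cube, p.1 < N ∧ p.2.1 < N ∧ p.2.2 < N := by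
    intro p hp
    simp only [hcube, Finset.mem_product, Finset.mem_range] at hp
    exact ⟨hp.1, hp.2.1, hp.2.2⟩
  have hsub : cube.filter (fun l => D3 N l.1 l.2.1 l.2.2 = r) ⊆
      (cube.filter P1 ∪ cube.filter P2) ∪ cube.filter P3 := by
    intro p hp
    simp only [Finset.mem_filter, Finset.mem_union] at hp ⊢
    obtain ⟨hpc, hd⟩ := hp
    unfold D3 at hd
    rw [Dpair_comm N p.2.1 p.1, Dpair_comm N p.2.2 p.1, Dpair_comm N p.2.2 p.2.1] at hd
    have hP : P1 p ∨ P2 p ∨ P3 p := by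
      simp only [hP1, hP2, hP3]
      generalize Dpair N p.1 p.2.1 = A at hd ⊢
      generalize Dpair N p.1 p.2.2 = B at hd ⊢
      generalize Dpair N p.2.1 p.2.2 = C at hd ⊢
      omega
    rcases hP with h | h | h
    · exact Or.inl (Or.inl ⟨hpc, h⟩)
    · exact Or.inl (Or.inr ⟨hpc, h⟩)
    · exact Or.inr ⟨hpc, h⟩
  -- bound each piece
  have key1 : (cube.filter P1).card ≤ 4 * (N * (2*r+1)) := by
    apply key N r
    intro p hp
    simp only [Finset.mem_filter] at hp
    exact ⟨(hmem p hp.1).1, (hmem p hp.1).2.1, (hmem p hp.1).2.2, hp.2.1, hp.2.2⟩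
  have key2 : (cube.filter P2).card ≤ 4 * (N * (2*r+1)) := by
    have hg : Function.Injective (fun p : ℕ×ℕ×ℕ => (p.1, p.2.2, p.2.1)) := by
      intro ⟨a,b,c⟩ ⟨a',b',c'⟩ h
      simp only [Prod.mk.injEq] at h ⊢
      tauto
    rw [← Finset.card_image_of_injective (cube.filter P2) hg]
    apply key N r
    intro q hq
    simp only [Finset.mem_image, Finset.mem_filter] at hq
    obtain ⟨p, ⟨hpc, hp2⟩, rfl⟩ := hq
    obtain ⟨m1, m2, m3⟩ := hmem p hpc
    refine ⟨m1, m3, m2, hp2.1, ?_⟩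
    rcases hp2.2 with h | h
    · exact Or.inl h
    · exact Or.inr (by rw [Dpair_comm]; exact h)
  have key3 : (cube.filter P3).card ≤ 4 * (N * (2*r+1)) := by
    have hg : Function.Injective (fun p : ℕ×ℕ×ℕ => (p.2.1, p.2.2, p.1)) := by
      intro ⟨a,b,c⟩ ⟨a',b',c'⟩ h
      simp only [Prod.mk.injEq] at h ⊢
      tauto
    rw [← Finset.card_image_of_injective (cube.filter P3) hg]
    apply key N r
    intro q hq
    simp only [Finset.mem_image, Finset.mem_filter] at hq
    obtain ⟨p, ⟨hpc, hp3⟩, rfl⟩ := hq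
    obtain ⟨m1, m2, m3⟩ := hmem p hpc
    refine ⟨m2, m3, m1, hp3.1, ?_⟩
    rcases hp3.2 with h | h
    · exact Or.inl (by rw [Dpair_comm]; exact h)
    · exact Or.inr (by rw [Dpair_comm]; exact h)
  have hnat : (cube.filter (fun l => D3 N l.1 l.2.1 l.2.2 = r)).card ≤ 24 * N * (r+1) := by
    calc (cube.filter (fun l => D3 N l.1 l.2.1 l.2.2 = r)).card
        ≤ ((cube.filter P1 ∪ cube.filter P2) ∪ cube.filter P3).card :=
          Finset.card_le_card hsub
      _ ≤ (cube.filter P1 ∪ cube.filter P2).card + (cube.filter P3).card :=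
          Finset.card_union_le _ _
      _ ≤ ((cube.filter P1).card + (cube.filter P2).card) + (cube.filter P3).card :=
          by gcongr; exact Finset.card_union_le _ _
      _ ≤ 24 * N * (r+1) := by
          have e1 : 12*(N*(2*r+1)) = 24*(N*r) + 12*N := by ring
          have e2 : 24*N*(r+1) = 24*(N*r) + 24*N := by ring
          omega
  calc ((cube.filter (fun l => D3 N l.1 l.2.1 l.2.2 = r)).card : ℝ)
      ≤ ((24 * N * (r+1) : ℕ) : ℝ) := by exact_mod_cast hnat
    _ = 24 * N * (r + 1) := by push_cast; ring
end

section
/- Let G be a Hermitian operator and ρ a density matrix commuting with G on a finite-dimensional Hilbert space, with tr(ρG) = 0. Suppose G = Σ_{l=0}^{N−1} G_l with each tr(ρG_l) = 0, and suppose there are constants K, ξ > 0 such that |tr(ρ G_{l₁} G_{l₂} G_{l₃})| ≤ K·e^{−D(l₁,l₂,l₃)/ξ} for all l₁,l₂,l₃, where D is the cyclic max-min distance. Then |tr(ρG³)| ≤ C·N for a constant C depending only on K and ξ. -/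
open Matrix ComplexOrder

lemma Dpair_comm_s6 (N a b : ℕ) : Dpair N a b = Dpair N b a := by
  unfold Dpair; omega

lemma Dpair_triangle (N a b c : ℕ) (ha : a < N) (hb : b < N) (hc : c < N) :
    Dpair N a b ≤ Dpair N a c + Dpair N c b := by
  unfold Dpair; omega

lemma D3_ge (N a b c : ℕ) (ha : a < N) (hb : b < N) (hc : c < N) :
    Dpair N a b + Dpair N a c ≤ 3 * D3 N a b c := by
  have t1 := Dpair_triangle N a b c ha hb hc
  have t2 := Dpair_triangle N a c b ha hc hb
  have t3 := Dpair_triangle N b c a hb hc ha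
  have e1 := Dpair_comm_s6 N a b
  have e2 := Dpair_comm_s6 N a c
  have e3 := Dpair_comm_s6 N b c
  unfold D3
  omega

lemma fiber_sub (N c d : ℕ) (hc : c < N) :
    (Finset.range N).filter (fun l => Dpair N c l = d) ⊆
      ({c + d, c - d, c + d - N, c + N - d} : Finset ℕ) := by
  intro l hl
  simp only [Finset.mem_filter, Finset.mem_range] at hl
  obtain ⟨h1, h2⟩ := hl
  unfold Dpair at h2
  simp only [Finset.mem_insert, Finset.mem_singleton]
  omega

lemma fiber_card (N c d : ℕ) (hc : c < N) :
    ((Finset.range N).filter (fun l => Dpair N c l = d)).card ≤ 4 := by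
  refine (Finset.card_le_card (fiber_sub N c d hc)).trans ?_
  refine (Finset.card_insert_le _ _).trans (Nat.succ_le_succ ?_)
  refine (Finset.card_insert_le _ _).trans (Nat.succ_le_succ ?_)
  refine (Finset.card_insert_le _ _).trans (Nat.succ_le_succ ?_)
  simp

lemma row_sum (r : ℝ) (h0 : 0 ≤ r) (h1 : r < 1) (N c : ℕ) (hc : c < N) :
    ∑ l ∈ Finset.range N, r ^ Dpair N c l ≤ 4 / (1 - r) := by
  classical
  have hmem : ∀ l ∈ Finset.range N, Dpair N c l ∈ Finset.range (N + 1) := by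
    intro l _
    simp only [Finset.mem_range]
    unfold Dpair; omega
  rw [← Finset.sum_fiberwise_of_maps_to hmem]
  have hgeom : ∑ d ∈ Finset.range (N + 1), r ^ d ≤ 1 / (1 - r) := by
    have hne : r ≠ 1 := ne_of_lt h1
    rw [geom_sum_eq hne]
    have heq : (r ^ (N + 1) - 1) / (r - 1) = (1 - r ^ (N + 1)) / (1 - r) := by
      rw [div_eq_div_iff (by linarith) (by linarith)]; ring
    rw [heq, div_le_div_iff₀ (by linarith) (by linarith)]
    have : (0:ℝ) ≤ r ^ (N + 1) := pow_nonneg h0 _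
    nlinarith
  calc ∑ d ∈ Finset.range (N + 1), ∑ l ∈ (Finset.range N).filter (fun l => Dpair N c l = d), r ^ Dpair N c l
      ≤ ∑ d ∈ Finset.range (N + 1), 4 * r ^ d := by
        refine Finset.sum_le_sum fun d _ => ?_
        have h : ∑ l ∈ (Finset.range N).filter (fun l => Dpair N c l = d), r ^ Dpair N c l
            = ∑ l ∈ (Finset.range N).filter (fun l => Dpair N c l = d), r ^ d := by
          refine Finset.sum_congr rfl fun l hl => ?_
          simp only [Finset.mem_filter] at hl
          rw [hl.2]
        rw [h, Finset.sum_const, nsmul_eq_mul]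
        have hrd : (0:ℝ) ≤ r ^ d := pow_nonneg h0 _
        have h4 : (((Finset.range N).filter (fun l => Dpair N c l = d)).card : ℝ) ≤ 4 := by
          exact_mod_cast fiber_card N c d hc
        nlinarith
    _ = 4 * ∑ d ∈ Finset.range (N + 1), r ^ d := by rw [Finset.mul_sum]
    _ ≤ 4 * (1 / (1 - r)) := by nlinarith
    _ = 4 / (1 - r) := by ring

theorem stmt6 (K ξ : ℝ) (hK : 0 ≤ K) (hξ : 0 < ξ) :
    ∃ C : ℝ, 0 ≤ C ∧
      ∀ (N : ℕ) (n : Type) (_ : Fintype n) (_ : DecidableEq n)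
        (ρ G : Matrix n n ℂ) (Gl : ℕ → Matrix n n ℂ),
        1 ≤ N →
        ρ.PosSemidef → ρ.trace = 1 → G.IsHermitian → Commute ρ G →
        G = ∑ l ∈ Finset.range N, Gl l →
        (∀ l ∈ Finset.range N, (ρ * Gl l).trace = 0) →
        (∀ l₁ ∈ Finset.range N, ∀ l₂ ∈ Finset.range N, ∀ l₃ ∈ Finset.range N,
          ‖(ρ * (Gl l₁ * Gl l₂ * Gl l₃)).trace‖
            ≤ K * Real.exp (-(D3 N l₁ l₂ l₃ : ℝ) / ξ)) →
        ‖(ρ * G ^ 3).trace‖ ≤ C * N := by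
  classical
  set r : ℝ := Real.exp (-(1 / (3 * ξ))) with hrdef
  have hr0 : 0 < r := Real.exp_pos _
  have hr1 : r < 1 := by
    have hpos : (0:ℝ) < 1 / (3 * ξ) := by positivity
    calc r = Real.exp (-(1 / (3 * ξ))) := hrdef
      _ < Real.exp 0 := Real.exp_lt_exp.2 (by linarith)
      _ = 1 := Real.exp_zero
  set S : ℝ := 4 / (1 - r) with hSdef
  have hS0 : 0 ≤ S := by
    apply div_nonneg (by norm_num) (by linarith)
  refine ⟨K * (S * S), by positivity, ?_⟩
  intro N n inst1 inst2 ρ G Gl hN hρ htr hG hcomm hGsum hzero h3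
  -- expand the trace
  have hcube : G ^ 3 = G * G * G := by rw [pow_succ, pow_succ, pow_one]
  have expand : (ρ * G ^ 3).trace
      = ∑ l₁ ∈ Finset.range N, ∑ l₂ ∈ Finset.range N, ∑ l₃ ∈ Finset.range N,
          (ρ * (Gl l₁ * Gl l₂ * Gl l₃)).trace := by
    rw [hcube, hGsum, Finset.sum_mul_sum, Finset.sum_mul]
    simp only [Finset.sum_mul, Finset.mul_sum, Matrix.trace_sum]
    refine Finset.sum_congr rfl fun l₁ _ => ?_
    rw [Finset.sum_comm]

  -- per-triple exponential bound
  have key : ∀ l₁ ∈ Finset.range N, ∀ l₂ ∈ Finset.range N, ∀ l₃ ∈ Finset.range N,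
      ‖(ρ * (Gl l₁ * Gl l₂ * Gl l₃)).trace‖
        ≤ K * (r ^ Dpair N l₁ l₂ * r ^ Dpair N l₁ l₃) := by
    intro l₁ h₁ l₂ h₂ l₃ h₃
    refine (h3 l₁ h₁ l₂ h₂ l₃ h₃).trans ?_
    apply mul_le_mul_of_nonneg_left _ hK
    simp only [Finset.mem_range] at h₁ h₂ h₃
    have hD : (Dpair N l₁ l₂ + Dpair N l₁ l₃ : ℕ) ≤ 3 * D3 N l₁ l₂ l₃ :=
      D3_ge N l₁ l₂ l₃ h₁ h₂ h₃
    have hDr : (Dpair N l₁ l₂ : ℝ) + (Dpair N l₁ l₃ : ℝ) ≤ 3 * (D3 N l₁ l₂ l₃ : ℝ) := by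
      exact_mod_cast hD
    rw [hrdef, ← Real.exp_nat_mul, ← Real.exp_nat_mul, ← Real.exp_add]
    apply Real.exp_le_exp.2
    have h3ξ : (0:ℝ) < 3 * ξ := by linarith
    have hre : (Dpair N l₁ l₂ : ℝ) * -(1 / (3 * ξ)) + (Dpair N l₁ l₃ : ℝ) * -(1 / (3 * ξ))
        = -(((Dpair N l₁ l₂ : ℝ) + (Dpair N l₁ l₃ : ℝ)) / (3 * ξ)) := by ring
    rw [hre, neg_div, neg_le_neg_iff, div_le_div_iff₀ h3ξ hξ]
    nlinarith
  rw [expand]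
  calc ‖∑ l₁ ∈ Finset.range N, ∑ l₂ ∈ Finset.range N, ∑ l₃ ∈ Finset.range N,
          (ρ * (Gl l₁ * Gl l₂ * Gl l₃)).trace‖
      ≤ ∑ l₁ ∈ Finset.range N, ∑ l₂ ∈ Finset.range N, ∑ l₃ ∈ Finset.range N,
          K * (r ^ Dpair N l₁ l₂ * r ^ Dpair N l₁ l₃) := by
        refine (norm_sum_le _ _).trans (Finset.sum_le_sum fun l₁ h₁ => ?_)
        refine (norm_sum_le _ _).trans (Finset.sum_le_sum fun l₂ h₂ => ?_)
        refine (norm_sum_le _ _).trans (Finset.sum_le_sum fun l₃ h₃ => ?_)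
        exact key l₁ h₁ l₂ h₂ l₃ h₃
    _ ≤ ∑ _l₁ ∈ Finset.range N, K * (S * S) := by
        refine Finset.sum_le_sum fun l₁ h₁ => ?_
        have e : ∑ l₂ ∈ Finset.range N, ∑ l₃ ∈ Finset.range N,
              K * (r ^ Dpair N l₁ l₂ * r ^ Dpair N l₁ l₃)
            = K * ((∑ l₂ ∈ Finset.range N, r ^ Dpair N l₁ l₂) *
                   (∑ l₃ ∈ Finset.range N, r ^ Dpair N l₁ l₃)) := by
          rw [Finset.sum_mul_sum, Finset.mul_sum]
          refine Finset.sum_congr rfl fun _ _ => ?_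
          rw [Finset.mul_sum]
        rw [e]
        have h₁' : l₁ < N := Finset.mem_range.1 h₁
        have hrow := row_sum r hr0.le hr1 N l₁ h₁'
        have hnn : 0 ≤ ∑ l₂ ∈ Finset.range N, r ^ Dpair N l₁ l₂ :=
          Finset.sum_nonneg fun _ _ => pow_nonneg hr0.le _
        apply mul_le_mul_of_nonneg_left _ hK
        exact mul_le_mul hrow hrow hnn hS0
    _ = K * (S * S) * N := by
        rw [Finset.sum_const, Finset.card_range, nsmul_eq_mul]; ring
end
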